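/- Let X be a connected simple graph with vertex set V and capacity function c assigning a positive integer to each edge, and let s, t be distinct vertices such that some cut separates s and t. Let n be the minimal capacity of a cut separating s and t. Then there exists a cut D with s ∈ D, t ∈ D* and c(D) = n such that D ⊆ A for every cut A with s ∈ A, t ∈ A* and c(A) = n; in particular the smallest minimum-capacity cut separating s and t is unique. -/
import Mathlib


open Classical

/-- The set of edges of `G` with one endpoint in `A` and one in the complement of `A`. -/
def cutEdges {V : Type*} (G : SimpleGraph V) (A : Set V) : Set (Sym2 V) :=
  {e | e ∈ G.edgeSet ∧ ∃ u v, e = s(u, v) ∧ u ∈ A ∧ v ∉ A}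

/-- The capacity of a cut: the sum of the capacities of the edges across it. -/
noncomputable def cutCap {V : Type*} (G : SimpleGraph V) (c : Sym2 V → ℕ) (A : Set V) : ℕ :=
  ∑ᶠ e ∈ cutEdges G A, c e

/-- A cut: a nonempty proper subset of the vertices with finite edge boundary. -/
def IsCut {V : Type*} (G : SimpleGraph V) (A : Set V) : Prop :=
  A ≠ ∅ ∧ A ≠ Set.univ ∧ (cutEdges G A).Finite

/-- A cut `A` separates the vertices `u` and `v`. -/
def SeparatesV {V : Type*} (A : Set V) (u v : V) : Prop :=
  (u ∈ A ∧ v ∉ A) ∨ (v ∈ A ∧ u ∉ A)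

section Aux

variable {V : Type*} (G : SimpleGraph V)

lemma cutEdges_compl (A : Set V) : cutEdges G Aᶜ = cutEdges G A := by
  ext e
  simp only [cutEdges, Set.mem_setOf_eq, Set.mem_compl_iff, not_not]
  constructor
  · rintro ⟨he, u, v, rfl, hu, hv⟩
    exact ⟨he, v, u, Sym2.eq_swap.symm, hv, hu⟩
  · rintro ⟨he, u, v, rfl, hu, hv⟩
    exact ⟨he, v, u, Sym2.eq_swap.symm, hv, hu⟩

lemma cutEdges_inter_subset (A B : Set V) :
    cutEdges G (A ∩ B) ⊆ cutEdges G A ∪ cutEdges G B := by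
  rintro e ⟨he, u, v, rfl, ⟨huA, huB⟩, hv⟩
  rcases Classical.em (v ∈ A) with hvA | hvA
  · exact Or.inr ⟨he, u, v, rfl, huB, fun hvB => hv ⟨hvA, hvB⟩⟩
  · exact Or.inl ⟨he, u, v, rfl, huA, hvA⟩

lemma cutEdges_union_subset (A B : Set V) :
    cutEdges G (A ∪ B) ⊆ cutEdges G A ∪ cutEdges G B := by
  rintro e ⟨he, u, v, rfl, hu, hv⟩
  rcases hu with huA | huB
  · exact Or.inl ⟨he, u, v, rfl, huA, fun hvA => hv (Or.inl hvA)⟩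
  · exact Or.inr ⟨he, u, v, rfl, huB, fun hvB => hv (Or.inr hvB)⟩

lemma cutEdges_inter_union_subset (A B : Set V) :
    cutEdges G (A ∩ B) ∩ cutEdges G (A ∪ B) ⊆ cutEdges G A ∩ cutEdges G B := by
  rintro e ⟨⟨he, u, v, rfl, ⟨huA, huB⟩, hv⟩, ⟨_, u', v', he', hu', hv'⟩⟩
  rcases Sym2.eq_iff.mp he' with ⟨hu1, hv1⟩ | ⟨hu1, hv1⟩
  · -- u' = u, v' = v : then v ∉ A ∪ B
    subst hu1; subst hv1
    exact ⟨⟨he, u, v, rfl, huA, fun h => hv' (Or.inl h)⟩,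
      ⟨he, u, v, rfl, huB, fun h => hv' (Or.inr h)⟩⟩
  · -- u' = v, v' = u : contradiction since u ∈ A ∪ B
    subst hu1; subst hv1
    exact absurd (Or.inl huA) hv'

lemma cutCap_eq_sum (c : Sym2 V → ℕ) {A : Set V} (h : (cutEdges G A).Finite) :
    cutCap G c A = ∑ e ∈ h.toFinset, c e := by
  rw [cutCap, ← finsum_mem_coe_finset, Set.Finite.coe_toFinset]

lemma cutCap_submodular (c : Sym2 V → ℕ) {A B : Set V}
    (hA : (cutEdges G A).Finite) (hB : (cutEdges G B).Finite) :
    cutCap G c (A ∩ B) + cutCap G c (A ∪ B) ≤ cutCap G c A + cutCap G c B := by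
  have hI : (cutEdges G (A ∩ B)).Finite :=
    (hA.union hB).subset (cutEdges_inter_subset G A B)
  have hU : (cutEdges G (A ∪ B)).Finite :=
    (hA.union hB).subset (cutEdges_union_subset G A B)
  rw [cutCap_eq_sum G c hA, cutCap_eq_sum G c hB, cutCap_eq_sum G c hI, cutCap_eq_sum G c hU]
  rw [← Finset.sum_union_inter (s₁ := hA.toFinset) (s₂ := hB.toFinset),
    ← Finset.sum_union_inter (s₁ := hI.toFinset) (s₂ := hU.toFinset)]
  have h1 : hI.toFinset ∪ hU.toFinset ⊆ hA.toFinset ∪ hB.toFinset := by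
    intro e he
    simp only [Finset.mem_union, Set.Finite.mem_toFinset] at he ⊢
    rcases he with he | he
    · exact cutEdges_inter_subset G A B he
    · exact cutEdges_union_subset G A B he
  have h2 : hI.toFinset ∩ hU.toFinset ⊆ hA.toFinset ∩ hB.toFinset := by
    intro e he
    simp only [Finset.mem_inter, Set.Finite.mem_toFinset] at he ⊢
    exact cutEdges_inter_union_subset G A B ⟨he.1, he.2⟩
  exact Nat.add_le_add (Finset.sum_le_sum_of_subset h1) (Finset.sum_le_sum_of_subset h2)

end Aux

/-- There is a unique smallest minimum-capacity cut separating `s` and `t`: a cut `D`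
with `s ∈ D`, `t ∉ D` and `c(D) = n` which is contained in every cut `A` with `s ∈ A`,
`t ∉ A` and `c(A) = n`, where `n` is the minimal capacity of a cut separating `s`, `t`. -/
theorem smallest_min_cut_unique {V : Type*} (G : SimpleGraph V) (hG : G.Connected)
    (c : Sym2 V → ℕ) (hc : ∀ e ∈ G.edgeSet, 0 < c e) (s t : V) (hst : s ≠ t)
    (hsep : ∃ A : Set V, IsCut G A ∧ SeparatesV A s t)
    (n : ℕ)
    (hn : n = sInf {k : ℕ | ∃ A : Set V, IsCut G A ∧ SeparatesV A s t ∧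
      cutCap G c A = k}) :
    ∃ D : Set V, IsCut G D ∧ s ∈ D ∧ t ∉ D ∧ cutCap G c D = n ∧
      ∀ A : Set V, IsCut G A → s ∈ A → t ∉ A → cutCap G c A = n → D ⊆ A := by
  classical
  set K : Set ℕ := {k : ℕ | ∃ A : Set V, IsCut G A ∧ SeparatesV A s t ∧ cutCap G c A = k}
    with hK
  -- the set of minimum cuts containing s
  set S : Set (Set V) := {A : Set V | IsCut G A ∧ s ∈ A ∧ t ∉ A ∧ cutCap G c A = n} with hS
  -- K is nonempty
  have hKne : K.Nonempty := by
    obtain ⟨A, hA, hAsep⟩ := hsep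
    exact ⟨cutCap G c A, A, hA, hAsep, rfl⟩
  -- lower bound: every cut separating s,t has capacity ≥ n
  have hlow : ∀ A : Set V, IsCut G A → s ∈ A → t ∉ A → n ≤ cutCap G c A := by
    intro A hA hs ht
    rw [hn]
    exact Nat.sInf_le ⟨A, hA, Or.inl ⟨hs, ht⟩, rfl⟩
  -- S is nonempty
  have hSne : S.Nonempty := by
    have : n ∈ K := hn ▸ Nat.sInf_mem hKne
    obtain ⟨A, hA, hAsep, hAcap⟩ := this
    rcases hAsep with ⟨hs, ht⟩ | ⟨ht, hs⟩
    · exact ⟨A, hA, hs, ht, hAcap⟩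
    · refine ⟨Aᶜ, ⟨?_, ?_, ?_⟩, hs, fun h => h ht, ?_⟩
      · exact Set.nonempty_iff_ne_empty.mp ⟨s, hs⟩
      · intro h
        exact (h ▸ Set.mem_univ t : t ∈ Aᶜ) ht
      · rw [cutEdges_compl]; exact hA.2.2
      · rw [cutCap, cutEdges_compl]; exact hAcap
  obtain ⟨A0, hA0⟩ := hSne
  -- S is closed under intersection
  have hinter : ∀ A ∈ S, ∀ B ∈ S, A ∩ B ∈ S := by
    rintro A ⟨hA, hsA, htA, hcA⟩ B ⟨hB, hsB, htB, hcB⟩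
    have hI : (cutEdges G (A ∩ B)).Finite :=
      (hA.2.2.union hB.2.2).subset (cutEdges_inter_subset G A B)
    have hU : (cutEdges G (A ∪ B)).Finite :=
      (hA.2.2.union hB.2.2).subset (cutEdges_union_subset G A B)
    have hIcut : IsCut G (A ∩ B) := by
      refine ⟨?_, ?_, hI⟩
      · exact Set.nonempty_iff_ne_empty.mp ⟨s, hsA, hsB⟩
      · intro h; exact htA (h ▸ Set.mem_univ t : t ∈ A ∩ B).1
    have hUcut : IsCut G (A ∪ B) := by
      refine ⟨?_, ?_, hU⟩
      · exact Set.nonempty_iff_ne_empty.mp ⟨s, Or.inl hsA⟩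
      · intro h
        rcases (h ▸ Set.mem_univ t : t ∈ A ∪ B) with h' | h'
        · exact htA h'
        · exact htB h'
    have h1 : n ≤ cutCap G c (A ∩ B) := hlow _ hIcut ⟨hsA, hsB⟩ (fun h => htA h.1)
    have h2 : n ≤ cutCap G c (A ∪ B) := hlow _ hUcut (Or.inl hsA)
      (fun h => h.elim htA htB)
    have h3 := cutCap_submodular G c hA.2.2 hB.2.2
    rw [hcA, hcB] at h3
    have hIc : cutCap G c (A ∩ B) = n := by omega
    exact ⟨hIcut, ⟨hsA, hsB⟩, fun h => htA h.1, hIc⟩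
  -- finite intersections stay in S
  have hfinInter : ∀ (F : Finset (Sym2 V)) (f : Sym2 V → Set V), (∀ e, f e ∈ S) →
      (A0 ∩ ⋂ e ∈ F, f e) ∈ S := by
    intro F f hf
    induction F using Finset.induction_on with
    | empty => simpa using hA0
    | @insert a F' ha ih =>
      have heq : (A0 ∩ ⋂ e ∈ insert a F', f e) = f a ∩ (A0 ∩ ⋂ e ∈ F', f e) := by
        rw [Finset.set_biInter_insert]
        ext x
        simp only [Set.mem_inter_iff]
        tauto
      rw [heq]
      exact hinter _ (hf a) _ ih
  -- define D
  set D : Set V := ⋂₀ S with hD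
  have hDsub : ∀ A ∈ S, D ⊆ A := fun A hA => Set.sInter_subset_of_mem hA
  have hsD : s ∈ D := by
    intro A hA
    exact hA.2.1
  have htD : t ∉ D := fun h => hA0.2.2.1 (hDsub A0 hA0 h)
  -- each edge of the boundary of D has a witness in S
  have hwit : ∀ e ∈ cutEdges G D, ∃ u v, e = s(u, v) ∧ u ∈ D ∧ ∃ B ∈ S, v ∉ B := by
    rintro e ⟨he, u, v, rfl, hu, hv⟩
    rw [hD, Set.mem_sInter] at hv
    push_neg at hv
    obtain ⟨B, hB, hvB⟩ := hv
    exact ⟨u, v, rfl, hu, B, hB, hvB⟩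
  -- choose a witness cut for each edge
  have hwit' : ∀ e : Sym2 V, ∃ Bf : Set V, Bf ∈ S ∧
      (e ∈ cutEdges G D → ∃ u v, e = s(u, v) ∧ u ∈ D ∧ v ∉ Bf) := by
    intro e
    by_cases he : e ∈ cutEdges G D
    · obtain ⟨u, v, hev, hu, B, hBS, hvB⟩ := hwit e he
      exact ⟨B, hBS, fun _ => ⟨u, v, hev, hu, hvB⟩⟩
    · exact ⟨A0, hA0, fun h => absurd h he⟩
  choose f hfS hfwit using hwit'
  -- for any finset F of boundary edges of D, F lies in the boundary of B F := A0 ∩ ⋂ f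
  have hFbound : ∀ F : Finset (Sym2 V), ↑F ⊆ cutEdges G D →
      ↑F ⊆ cutEdges G (A0 ∩ ⋂ e ∈ F, f e) := by
    intro F hF e heF
    have heD : e ∈ cutEdges G D := hF heF
    obtain ⟨u, v, hev, hu, hvfe⟩ := hfwit e heD
    have hBS : (A0 ∩ ⋂ e ∈ F, f e) ∈ S := hfinInter F f hfS
    refine ⟨heD.1, u, v, hev, hDsub _ hBS hu, fun hcon => ?_⟩
    have : v ∈ f e := by
      have := hcon.2
      rw [Set.mem_iInter₂] at this
      exact this e heF
    exact hvfe this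
  -- capacity of cut containing F bounds card F below
  have hcardbound : ∀ F : Finset (Sym2 V), ↑F ⊆ cutEdges G D → F.card ≤ n := by
    intro F hF
    have hBS : (A0 ∩ ⋂ e ∈ F, f e) ∈ S := hfinInter F f hfS
    have hBfin : (cutEdges G (A0 ∩ ⋂ e ∈ F, f e)).Finite := hBS.1.2.2
    have hsubF : F ⊆ hBfin.toFinset := by
      intro e he
      rw [Set.Finite.mem_toFinset]
      exact hFbound F hF he
    calc F.card = ∑ _e ∈ F, 1 := by simp
    _ ≤ ∑ e ∈ F, c e := by
        refine Finset.sum_le_sum fun e he => ?_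
        exact hc e (hF he).1
    _ ≤ ∑ e ∈ hBfin.toFinset, c e := Finset.sum_le_sum_of_subset hsubF
    _ = cutCap G c (A0 ∩ ⋂ e ∈ F, f e) := (cutCap_eq_sum G c hBfin).symm
    _ = n := hBS.2.2.2
  -- the boundary of D is finite
  have hDfin : (cutEdges G D).Finite := by
    by_contra h
    have hinf : (cutEdges G D).Infinite := h
    obtain ⟨F, hF, hcard⟩ := hinf.exists_subset_card_eq (n + 1)
    have := hcardbound F hF
    omega
  -- D is a cut
  have hDcut : IsCut G D := by
    refine ⟨?_, ?_, hDfin⟩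
    · exact Set.nonempty_iff_ne_empty.mp ⟨s, hsD⟩
    · intro h; exact htD (h ▸ Set.mem_univ t)
  -- capacity of D is at most n
  have hDle : cutCap G c D ≤ n := by
    have hF : ↑hDfin.toFinset ⊆ cutEdges G D := by
      rw [Set.Finite.coe_toFinset]
    have hBS : (A0 ∩ ⋂ e ∈ hDfin.toFinset, f e) ∈ S := hfinInter _ f hfS
    have hBfin : (cutEdges G (A0 ∩ ⋂ e ∈ hDfin.toFinset, f e)).Finite := hBS.1.2.2
    have hsubF : hDfin.toFinset ⊆ hBfin.toFinset := by
      intro e he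
      rw [Set.Finite.mem_toFinset]
      exact hFbound _ hF he
    calc cutCap G c D = ∑ e ∈ hDfin.toFinset, c e := cutCap_eq_sum G c hDfin
    _ ≤ ∑ e ∈ hBfin.toFinset, c e := Finset.sum_le_sum_of_subset hsubF
    _ = cutCap G c (A0 ∩ ⋂ e ∈ hDfin.toFinset, f e) := (cutCap_eq_sum G c hBfin).symm
    _ = n := hBS.2.2.2
  have hDcap : cutCap G c D = n := le_antisymm hDle (hlow D hDcut hsD htD)
  exact ⟨D, hDcut, hsD, htD, hDcap, fun A hA hs ht hcap => hDsub A ⟨hA, hs, ht, hcap⟩⟩
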